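/- With the same operator action, the quotient A' = K[x,x^{-1}]/A(m), identified with the span of {x^i : i ∈ ℤ, i < 0 or 1 ≤ i ≤ m-1}, is a simple module over the algebra generated by h, δ_{±1}, δ_{±2}: every nonzero invariant subspace equals A'. -/

import Mathlib

open Polynomial LaurentPolynomial

/-- The operator `f(h)x^a` of the skew Laurent ring `K[h][x,x⁻¹;σ]`, `σ(h) = h-1`,
acting on `K[x,x⁻¹]` by `(f(h)x^a) ∗ x^j = f(a+j+1) x^{a+j}`
(so that `h ∗ x^j = (j+1) x^j` and `x^{±1} ∗ x^j = x^{j±1}`). -/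
noncomputable def op (K : Type*) [Field K] (f : Polynomial K) (a : ℤ) :
    LaurentPolynomial K →ₗ[K] LaurentPolynomial K :=
  (Finsupp.lsum K fun j : ℤ =>
    f.eval ((a + j + 1 : ℤ) : K) •
      LinearMap.toSpanSingleton K (LaurentPolynomial K) (LaurentPolynomial.T (a + j)))
  ∘ₗ (AddMonoidAlgebra.coeffLinearEquiv K).toLinearMap

/-- `A(m) = K + Σ_{i ≥ m} K x^i`, as a subspace of `K[x,x⁻¹]`. -/
noncomputable def Am (K : Type*) [Field K] (m : ℕ) : Submodule K (LaurentPolynomial K) :=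
  Submodule.span K {p : LaurentPolynomial K | ∃ i : ℤ, (i = 0 ∨ (m : ℤ) ≤ i) ∧ p = T i}

/-- Projection of `K[x,x⁻¹]` onto the complement `A' = span{x^i : i ∈ E'}` of
`A(m)`, where `E' = ℤ \ ({0} ∪ {i : i ≥ m})`; it realizes the quotient action of
operators on `A' = K[x,x⁻¹]/A(m)`. -/
noncomputable def projE (K : Type*) [Field K] (m : ℕ) :
    LaurentPolynomial K →ₗ[K] LaurentPolynomial K :=
  (Finsupp.lsum K fun j : ℤ =>
    if j = 0 ∨ (m : ℤ) ≤ j then 0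
    else LinearMap.toSpanSingleton K (LaurentPolynomial K) (LaurentPolynomial.T j))
  ∘ₗ (AddMonoidAlgebra.coeffLinearEquiv K).toLinearMap

/-- `A' = span_K {x^i : i ∈ E'}`, `E' = ℤ \ ({0} ∪ {i : i ≥ m})`. -/
noncomputable def Am' (K : Type*) [Field K] (m : ℕ) : Submodule K (LaurentPolynomial K) :=
  Submodule.span K
    {p : LaurentPolynomial K | ∃ i : ℤ, ¬(i = 0 ∨ (m : ℤ) ≤ i) ∧ p = T i}

section Aux
variable {K : Type*} [Field K] {m : ℕ}

lemma aux_op_single (f : Polynomial K) (a k : ℤ) (c : K) :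
    op K f a (AddMonoidAlgebra.single k c) = (f.eval ((a + k + 1 : ℤ) : K) * c) • T (a + k) := by
  rw [op, LinearMap.comp_apply, LinearEquiv.coe_coe, AddMonoidAlgebra.coeffLinearEquiv_apply,
    AddMonoidAlgebra.coeff_single, Finsupp.lsum_single]
  rw [LinearMap.smul_apply, LinearMap.toSpanSingleton_apply, smul_smul]

lemma aux_projE_single (k : ℤ) (c : K) :
    projE K m (AddMonoidAlgebra.single k c) =
      if k = 0 ∨ (m : ℤ) ≤ k then 0 else c • T k := by
  rw [projE, LinearMap.comp_apply, LinearEquiv.coe_coe, AddMonoidAlgebra.coeffLinearEquiv_apply,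
    AddMonoidAlgebra.coeff_single, Finsupp.lsum_single]
  split <;> simp [LinearMap.toSpanSingleton_apply]

lemma aux_smul_T (k : ℤ) (c : K) : c • (T k : LaurentPolynomial K) = AddMonoidAlgebra.single k c := by
  rw [T]
  rw [AddMonoidAlgebra.smul_single]
  rw [smul_eq_mul, mul_one]

lemma aux_combo (f : Polynomial K) (a k : ℤ) :
    (projE K m ∘ₗ op K f a) (T k) =
      if a + k = 0 ∨ (m : ℤ) ≤ a + k then 0
      else f.eval ((a + k + 1 : ℤ) : K) • T (a + k) := by
  rw [LinearMap.comp_apply, T, aux_op_single, mul_one, aux_smul_T, aux_projE_single]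
  split
  · rfl
  · rw [aux_smul_T]

lemma aux_step {V : Submodule K (LaurentPolynomial K)} {f : Polynomial K} {a : ℤ}
    (hop : Submodule.map (projE K m ∘ₗ op K f a) V ≤ V) {k : ℤ}
    (hk : (T k : LaurentPolynomial K) ∈ V)
    (hE : ¬(a + k = 0 ∨ (m : ℤ) ≤ a + k))
    (hf : f.eval ((a + k + 1 : ℤ) : K) ≠ 0) :
    (T (a + k) : LaurentPolynomial K) ∈ V := by
  have h : (projE K m ∘ₗ op K f a) (T k) ∈ V :=
    hop (Submodule.mem_map_of_mem hk)
  rw [aux_combo, if_neg hE] at h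
  have := V.smul_mem (f.eval ((a + k + 1 : ℤ) : K))⁻¹ h
  rwa [inv_smul_smul₀ hf] at this

lemma aux_D_coeff (v : LaurentPolynomial K) (j : ℤ) :
    ((projE K m ∘ₗ op K X 0) v).coeff j =
      (if j = 0 ∨ (m : ℤ) ≤ j then 0 else ((j + 1 : ℤ) : K)) * v.coeff j := by
  induction v using AddMonoidAlgebra.induction_linear with
  | zero => simp
  | add p q hp hq =>
    rw [map_add]
    rw [AddMonoidAlgebra.coeff_add, AddMonoidAlgebra.coeff_add, Finsupp.add_apply, Finsupp.add_apply]
    rw [hp, hq, mul_add]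
  | single k c =>
    rw [LinearMap.comp_apply, aux_op_single, zero_add, aux_smul_T, aux_projE_single]
    by_cases hk : k = 0 ∨ (m : ℤ) ≤ k
    · rw [if_pos hk]
      rw [AddMonoidAlgebra.coeff_zero, Finsupp.zero_apply, AddMonoidAlgebra.coeff_single,
        Finsupp.single_apply]
      by_cases hjk : k = j
      · subst hjk; rw [if_pos rfl, if_pos hk, zero_mul]
      · rw [if_neg hjk, mul_zero]
    · rw [if_neg hk, aux_smul_T]
      rw [AddMonoidAlgebra.coeff_single, AddMonoidAlgebra.coeff_single, Finsupp.single_apply,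
        Finsupp.single_apply]
      by_cases hjk : k = j
      · subst hjk
        rw [if_pos rfl, if_pos rfl, if_neg hk, eval_X]
      · rw [if_neg hjk, if_neg hjk, mul_zero]

lemma aux_exists_T [CharZero K] {V : Submodule K (LaurentPolynomial K)}
    (hh : Submodule.map (projE K m ∘ₗ op K X 0) V ≤ V) :
    ∀ n : ℕ, ∀ v : LaurentPolynomial K, v.coeff.support.card ≤ n → v ∈ V → v ≠ 0 →
      (∀ k ∈ v.coeff.support, ¬(k = 0 ∨ (m : ℤ) ≤ k)) →
      ∃ i : ℤ, ¬(i = 0 ∨ (m : ℤ) ≤ i) ∧ (T i : LaurentPolynomial K) ∈ V := by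
  intro n
  induction n with
  | zero =>
    intro v hcard _ hv0 _
    exact absurd (AddMonoidAlgebra.coeff_eq_zero.mp <| Finsupp.support_eq_empty.mp (Finset.card_eq_zero.mp (Nat.le_zero.mp hcard)))
      hv0
  | succ n ih =>
    intro v hcard hvV hv0 hsupp
    obtain ⟨i, hi⟩ := Finsupp.support_nonempty_iff.mpr (AddMonoidAlgebra.coeff_eq_zero.not.mpr hv0)
    by_cases hsub : v.coeff.support ⊆ {i}
    · -- v is a single
      have hv : v = AddMonoidAlgebra.single i (v.coeff i) :=
        AddMonoidAlgebra.coeff_injective (Finsupp.support_subset_singleton.mp hsub)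
      have hvi : v.coeff i ≠ 0 := Finsupp.mem_support_iff.mp hi
      refine ⟨i, hsupp i hi, ?_⟩
      obtain ⟨c, hc, hvc⟩ : ∃ c : K, c ≠ 0 ∧ v = c • T i :=
        ⟨v.coeff i, hvi, by rw [aux_smul_T]; exact hv⟩
      have hT : (T i : LaurentPolynomial K) = c⁻¹ • v := by
        rw [hvc, smul_smul, inv_mul_cancel₀ hc, one_smul]
      rw [hT]
      exact V.smul_mem _ hvV
    · obtain ⟨j, hjs, hji⟩ : ∃ j ∈ v.coeff.support, j ≠ i := by
        by_contra hc
        push_neg at hc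
        exact hsub fun x hx => Finset.mem_singleton.mpr (hc x hx)
      set w : LaurentPolynomial K :=
        (projE K m ∘ₗ op K X 0) v - ((j + 1 : ℤ) : K) • v with hw
      have hwV : w ∈ V := V.sub_mem (hh (Submodule.mem_map_of_mem hvV)) (V.smul_mem _ hvV)
      have hwcoeff : ∀ k : ℤ, w.coeff k = (((k : K) - (j : K)) * v.coeff k) ∨ (v.coeff k = 0 ∧ w.coeff k = 0) := by
        intro k
        have : w.coeff k = ((projE K m ∘ₗ op K X 0) v).coeff k - ((j + 1 : ℤ) : K) * v.coeff k := by
          rw [hw]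
          rw [AddMonoidAlgebra.coeff_sub, Finsupp.sub_apply, AddMonoidAlgebra.coeff_smul,
            Finsupp.smul_apply]
          rw [smul_eq_mul]
        rw [aux_D_coeff] at this
        by_cases hk : v.coeff k = 0
        · right; exact ⟨hk, by rw [this, hk]; ring⟩
        · left
          have hkE := hsupp k (Finsupp.mem_support_iff.mpr hk)
          rw [if_neg hkE] at this
          rw [this]; push_cast; ring
      have hwsub : w.coeff.support ⊆ v.coeff.support.erase j := by
        intro k hk
        rw [Finset.mem_erase, Finsupp.mem_support_iff]
        have hwk := Finsupp.mem_support_iff.mp hk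
        rcases hwcoeff k with h | ⟨hv0', hw0⟩
        · constructor
          · rintro rfl
            rw [h, sub_self, zero_mul] at hwk
            exact hwk rfl
          · intro hc; rw [h, hc, mul_zero] at hwk; exact hwk rfl
        · exact absurd hw0 hwk
      have hwi : w.coeff i ≠ 0 := by
        rcases hwcoeff i with h | ⟨hv0', _⟩
        · rw [h]
          refine mul_ne_zero ?_ (Finsupp.mem_support_iff.mp hi)
          rw [sub_ne_zero]
          exact fun hc => hji ((Int.cast_injective hc).symm)
        · exact absurd hv0' (Finsupp.mem_support_iff.mp hi)
      have hwne : w ≠ 0 := fun hc => hwi (by rw [hc]; rfl)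
      have hcard' : w.coeff.support.card ≤ n := by
        have h1 := Finset.card_le_card hwsub
        have h2 := Finset.card_erase_of_mem hjs
        omega
      exact ih w hcard' hwV hwne fun k hk =>
        hsupp k (Finset.mem_of_mem_erase (hwsub hk))

lemma aux_up1 [CharZero K] {V : Submodule K (LaurentPolynomial K)}
    (h1 : Submodule.map (projE K m ∘ₗ op K (X - Polynomial.C 2) 1) V ≤ V) {k : ℤ}
    (hk : (T k : LaurentPolynomial K) ∈ V)
    (hkE : ¬(k = 0 ∨ (m : ℤ) ≤ k)) (hkE' : ¬(k + 1 = 0 ∨ (m : ℤ) ≤ k + 1)) :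
    (T (k + 1) : LaurentPolynomial K) ∈ V := by
  have hne : (X - Polynomial.C 2 : Polynomial K).eval ((1 + k + 1 : ℤ) : K) ≠ 0 := by
    simp only [eval_sub, eval_X, eval_C]
    have : ((1 + k + 1 : ℤ) : K) - 2 = ((k : ℤ) : K) := by push_cast; ring
    rw [this]
    exact_mod_cast fun hc => hkE (Or.inl (by exact_mod_cast hc))
  have h := aux_step h1 hk (by rw [show (1 : ℤ) + k = k + 1 by ring]; exact hkE') hne
  rwa [show (1 : ℤ) + k = k + 1 by ring] at h

lemma aux_down1 [CharZero K] {V : Submodule K (LaurentPolynomial K)}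
    (hneg1 : Submodule.map
      (projE K m ∘ₗ op K (X * (X - Polynomial.C (m : K))) (-1)) V ≤ V) {k : ℤ}
    (hk : (T k : LaurentPolynomial K) ∈ V)
    (hkE : ¬(k = 0 ∨ (m : ℤ) ≤ k)) (hkE' : ¬(k - 1 = 0 ∨ (m : ℤ) ≤ k - 1)) :
    (T (k - 1) : LaurentPolynomial K) ∈ V := by
  push_neg at hkE
  have hne : (X * (X - Polynomial.C (m : K))).eval ((-1 + k + 1 : ℤ) : K) ≠ 0 := by
    simp only [eval_mul, eval_sub, eval_X, eval_C]
    have e1 : ((-1 + k + 1 : ℤ) : K) = ((k : ℤ) : K) := by push_cast; ring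
    rw [e1]
    refine mul_ne_zero ?_ ?_
    · exact_mod_cast fun hc => hkE.1 (by exact_mod_cast hc)
    · rw [sub_ne_zero]
      intro hc
      have : (k : ℤ) = (m : ℤ) := by exact_mod_cast hc
      omega
  have h := aux_step hneg1 hk
    (by rw [show (-1 : ℤ) + k = k - 1 by ring]; exact hkE') hne
  rwa [show (-1 : ℤ) + k = k - 1 by ring] at h

lemma aux_up2 [CharZero K] {V : Submodule K (LaurentPolynomial K)} (hm : 2 ≤ m)
    (h2 : Submodule.map (projE K m ∘ₗ op K (X - Polynomial.C 3) 2) V ≤ V)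
    (hk : (T (-1) : LaurentPolynomial K) ∈ V) :
    (T 1 : LaurentPolynomial K) ∈ V := by
  have hm' : (2 : ℤ) ≤ (m : ℤ) := by exact_mod_cast hm
  have hne : (X - Polynomial.C 3 : Polynomial K).eval ((2 + (-1) + 1 : ℤ) : K) ≠ 0 := by
    simp only [eval_sub, eval_X, eval_C]
    have : ((2 + (-1) + 1 : ℤ) : K) - 3 = -1 := by push_cast; ring
    rw [this]
    exact neg_ne_zero.mpr one_ne_zero
  have h := aux_step h2 hk (by omega) hne
  rwa [show (2 : ℤ) + (-1) = 1 by ring] at h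

lemma aux_down2 [CharZero K] {V : Submodule K (LaurentPolynomial K)} (hm : 2 ≤ m)
    (hneg2 : Submodule.map
      (projE K m ∘ₗ op K ((X + Polynomial.C 1) * (X - Polynomial.C ((m : K) - 1)) *
        (X - Polynomial.C (m : K))) (-2)) V ≤ V)
    (hk : (T 1 : LaurentPolynomial K) ∈ V) :
    (T (-1) : LaurentPolynomial K) ∈ V := by
  have hm' : (2 : ℤ) ≤ (m : ℤ) := by exact_mod_cast hm
  have hmK : (m : K) ≠ 0 := Nat.cast_ne_zero.mpr (by omega)
  have hmK1 : (m : K) ≠ 1 := by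
    intro hc
    have : (m : ℕ) = 1 := by exact_mod_cast hc
    omega
  have hne : ((X + Polynomial.C 1) * (X - Polynomial.C ((m : K) - 1)) *
      (X - Polynomial.C (m : K))).eval ((-2 + 1 + 1 : ℤ) : K) ≠ 0 := by
    simp only [eval_mul, eval_add, eval_sub, eval_X, eval_C]
    have e0 : ((-2 + 1 + 1 : ℤ) : K) = 0 := by push_cast; ring
    rw [e0]
    refine mul_ne_zero (mul_ne_zero ?_ ?_) ?_
    · rw [zero_add]; exact one_ne_zero
    · rw [zero_sub, neg_ne_zero, sub_ne_zero]; exact hmK1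
    · rw [zero_sub, neg_ne_zero]; exact hmK
  have h := aux_step hneg2 hk (by omega) hne
  rwa [show (-2 : ℤ) + 1 = -1 by ring] at h

lemma aux_Am'_supported :
    Am' K m = AddMonoidAlgebra.supported K K {i : ℤ | ¬(i = 0 ∨ (m : ℤ) ≤ i)} := by
  rw [AddMonoidAlgebra.supported_eq_span_single, Am']
  congr 1
  ext p
  simp only [Set.mem_image, Set.mem_setOf_eq]
  constructor
  · rintro ⟨i, hi, rfl⟩; exact ⟨i, hi, rfl⟩
  · rintro ⟨i, hi, rfl⟩; exact ⟨i, hi, rfl⟩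

end Aux

/-- the quotient `A' = K[x,x⁻¹]/A(m)`, identified with the span of
`{x^i : i ∈ E'}` with the truncated (quotient) action of the operators `h`,
`δ₁ = (h-2)x`, `δ₋₁ = h(h-m)x⁻¹`, `δ₂ = (h-3)x²`, `δ₋₂ = (h+1)(h-m+1)(h-m)x⁻²`,
is a simple module over the algebra these generate: every nonzero invariant
subspace equals `A'`. -/
theorem stmt17 (K : Type*) [Field K] [CharZero K] (m : ℕ) (hm : 2 ≤ m)
    (V : Submodule K (LaurentPolynomial K)) (hVA : V ≤ Am' K m)
    (hh : Submodule.map (projE K m ∘ₗ op K X 0) V ≤ V)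
    (h1 : Submodule.map (projE K m ∘ₗ op K (X - Polynomial.C 2) 1) V ≤ V)
    (hneg1 : Submodule.map
      (projE K m ∘ₗ op K (X * (X - Polynomial.C (m : K))) (-1)) V ≤ V)
    (h2 : Submodule.map (projE K m ∘ₗ op K (X - Polynomial.C 3) 2) V ≤ V)
    (hneg2 : Submodule.map
      (projE K m ∘ₗ op K ((X + Polynomial.C 1) * (X - Polynomial.C ((m : K) - 1)) *
        (X - Polynomial.C (m : K))) (-2)) V ≤ V)
    (hV : V ≠ ⊥) :
    V = Am' K m := by
  have hm' : (2 : ℤ) ≤ (m : ℤ) := by exact_mod_cast hm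
  -- get a nonzero element
  obtain ⟨v, hvV, hv0⟩ := Submodule.exists_mem_ne_zero_of_ne_bot hV
  have hvsupp : ∀ k ∈ v.coeff.support, ¬(k = 0 ∨ (m : ℤ) ≤ k) := by
    have := hVA hvV
    rw [aux_Am'_supported, AddMonoidAlgebra.mem_supported] at this
    intro k hk
    exact this hk
  -- extract a single T i ∈ V
  obtain ⟨i, hiE, hiV⟩ := aux_exists_T hh v.coeff.support.card v le_rfl hvV hv0 hvsupp
  -- T (-1) ∈ V
  have hneg1all : ∀ k : ℤ, k ≤ -1 → (T k : LaurentPolynomial K) ∈ V →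
      (T (-1) : LaurentPolynomial K) ∈ V := by
    intro k hk
    refine Int.le_induction_down (motive := fun n _ => (T n : LaurentPolynomial K) ∈ V →
      (T (-1) : LaurentPolynomial K) ∈ V) (fun h => h) ?_ k hk
    intro n hn hP hT
    have := aux_up1 h1 hT (by omega) (by omega)
    rw [sub_add_cancel] at this
    exact hP this
  have hpos_down : ∀ k : ℤ, 1 ≤ k → k ≤ (m : ℤ) - 1 →
      (T k : LaurentPolynomial K) ∈ V → (T 1 : LaurentPolynomial K) ∈ V := by
    intro k hk1
    refine Int.le_induction (motive := fun n _ => n ≤ (m : ℤ) - 1 →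
      (T n : LaurentPolynomial K) ∈ V → (T 1 : LaurentPolynomial K) ∈ V)
      (fun _ h => h) ?_ k hk1
    intro n hn hP hle hT
    have h' := aux_down1 hneg1 hT (by omega) (by omega)
    rw [add_sub_cancel_right] at h'
    exact hP (by omega) h'
  have hTneg1 : (T (-1) : LaurentPolynomial K) ∈ V := by
    rcases lt_or_gt_of_ne (fun hc : i = 0 => hiE (Or.inl hc)) with hlt | hgt
    · exact hneg1all i (by omega) hiV
    · have h1m : i ≤ (m : ℤ) - 1 := by
        rcases not_or.mp hiE with ⟨_, h⟩; omega
      exact aux_down2 hm hneg2 (hpos_down i (by omega) h1m hiV)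
  -- all of Am' is in V
  have hT1 : (T 1 : LaurentPolynomial K) ∈ V := aux_up2 hm h2 hTneg1
  have hallneg : ∀ k : ℤ, k ≤ -1 → (T k : LaurentPolynomial K) ∈ V := by
    intro k hk
    refine Int.le_induction_down (motive := fun n _ => (T n : LaurentPolynomial K) ∈ V)
      hTneg1 ?_ k hk
    intro n hn hT
    exact aux_down1 hneg1 hT (by omega) (by omega)
  have hallpos : ∀ k : ℤ, 1 ≤ k → k ≤ (m : ℤ) - 1 →
      (T k : LaurentPolynomial K) ∈ V := by
    intro k hk1
    refine Int.le_induction (motive := fun n _ => n ≤ (m : ℤ) - 1 →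
      (T n : LaurentPolynomial K) ∈ V) (fun _ => hT1) ?_ k hk1
    intro n hn hP hle
    exact aux_up1 h1 (hP (by omega)) (by omega) (by omega)
  refine le_antisymm hVA ?_
  rw [Am']
  rw [Submodule.span_le]
  rintro p ⟨j, hjE, rfl⟩
  rcases not_or.mp hjE with ⟨hj0, hjm⟩
  rcases lt_or_gt_of_ne hj0 with hlt | hgt
  · exact hallneg j (by omega) 
  · exact hallpos j (by omega) (by omega)
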